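/- Let s : A → B and t : A → C be functors of small categories and V a bicomplete category. For the cocomma square with inclusions f : B → B ↑_A C and g : C → B ↑_A C, the dual base change natural transformation f^* g_* ⟹ s_* t^* is a natural isomorphism of functors Fun(C, V) → Fun(B, V). -/

import Mathlib

open CategoryTheory CategoryTheory.Limits
universe v w u

section BaseChange
variable {A B C D : Type u} [SmallCategory A] [SmallCategory B] [SmallCategory C] [SmallCategory D]
variable (V : Type v) [Category.{w} V] [HasLimitsOfSize.{u,u} V]

/-- The transformation `f^* ⋙ s^* ⟶ g^* ⋙ t^*` induced by `α : s ⋙ f ⟶ t ⋙ g`. -/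
def restrictionSquare (s : A ⥤ B) (t : A ⥤ C) (f : B ⥤ D) (g : C ⥤ D) (α : s ⋙ f ⟶ t ⋙ g) :
    ((Functor.whiskeringLeft B D V).obj f ⋙ (Functor.whiskeringLeft A B V).obj s : (D ⥤ V) ⥤ (A ⥤ V)) ⟶
      (Functor.whiskeringLeft C D V).obj g ⋙ (Functor.whiskeringLeft A C V).obj t where
  app H := Functor.whiskerRight α H
  naturality := by intros; ext; simp

/-- The dual base change natural transformation `f^* g_* ⟶ s_* t^*` of a lax square,
built from the unit of `g^* ⊣ g_*` and the counit of `s^* ⊣ s_*`. -/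
noncomputable def coBaseChange (s : A ⥤ B) (t : A ⥤ C) (f : B ⥤ D) (g : C ⥤ D)
    (α : s ⋙ f ⟶ t ⋙ g) :
    (Functor.ran g ⋙ (Functor.whiskeringLeft B D V).obj f : (C ⥤ V) ⥤ (B ⥤ V)) ⟶
      (Functor.whiskeringLeft A C V).obj t ⋙ Functor.ran s :=
  Functor.whiskerLeft (Functor.ran g ⋙ (Functor.whiskeringLeft B D V).obj f) (s.ranAdjunction V).unit ≫
    Functor.whiskerRight (Functor.whiskerLeft (Functor.ran g) (restrictionSquare V s t f g α)) (Functor.ran s) ≫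
    Functor.whiskerRight (g.ranAdjunction V).counit ((Functor.whiskeringLeft A C V).obj t ⋙ Functor.ran s)

end BaseChange
variable {A B C : Type u} [SmallCategory A] [SmallCategory B] [SmallCategory C]

/-- A word `b ⟶ s(a) ⟶ t(a) ⟶ c` representing a morphism of the cocomma category. -/
structure CocommaWord (s : A ⥤ B) (t : A ⥤ C) (b : B) (c : C) : Type u where
  pt : A
  l : b ⟶ s.obj pt
  r : t.obj pt ⟶ c

/-- The relation on words generated by morphisms of `A`. -/
inductive CocommaRel (s : A ⥤ B) (t : A ⥤ C) (b : B) (c : C) :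
    CocommaWord s t b c → CocommaWord s t b c → Prop
  | mk {a a' : A} (θ : a ⟶ a') (φ : b ⟶ s.obj a) (ψ : t.obj a' ⟶ c) :
      CocommaRel s t b c ⟨a, φ, t.map θ ≫ ψ⟩ ⟨a', φ ≫ s.map θ, ψ⟩

/-- The cocomma (flow sum) category `B ↑_A C`: objects are `Ob B ⊔ Ob C`. -/
def Cocomma (s : A ⥤ B) (t : A ⥤ C) : Type u := B ⊕ C

variable (s : A ⥤ B) (t : A ⥤ C)

/-- Morphisms of the cocomma category. -/
def CocommaHom : Cocomma s t → Cocomma s t → Type u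
  | .inl b, .inl b' => b ⟶ b'
  | .inl b, .inr c => Quot (CocommaRel s t b c)
  | .inr _, .inl _ => PEmpty
  | .inr c, .inr c' => c ⟶ c'

instance : Category.{u} (Cocomma s t) where
  Hom := CocommaHom s t
  id x := match x with
    | .inl b => (𝟙 b : b ⟶ b)
    | .inr c => (𝟙 c : c ⟶ c)
  comp {x y z} F G := match x, y, z, F, G with
    | .inl _, .inl _, .inl _, F, G => (F ≫ G : _ ⟶ _)
    | .inl _b, .inl _b', .inr _c, F, G =>
        Quot.lift (fun w => Quot.mk _ ⟨w.pt, F ≫ w.l, w.r⟩)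
          (by rintro _ _ ⟨θ, φ, ψ⟩; dsimp
              erw [← Category.assoc]
              exact Quot.sound (CocommaRel.mk θ (F ≫ φ) ψ)) G
    | .inl _b, .inr _c, .inr _c', F, G =>
        Quot.lift (fun w => Quot.mk _ ⟨w.pt, w.l, w.r ≫ G⟩)
          (by rintro _ _ ⟨θ, φ, ψ⟩; dsimp
              erw [Category.assoc]
              exact Quot.sound (CocommaRel.mk θ φ (ψ ≫ G))) F
    | .inr _, .inr _, .inr _, F, G => (F ≫ G : _ ⟶ _)
    | .inr _, .inl _, _, F, _ => F.elim
    | .inl _, .inr _, .inl _, _, G => G.elim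
    | .inr _, .inr _, .inl _, _, G => G.elim
  id_comp {x y} F := by
    match x, y, F with
    | .inl _, .inl _, F => exact Category.id_comp F
    | .inl _, .inr _, F =>
        induction F using Quot.ind with
        | _ w => dsimp; rw [Category.id_comp]
    | .inr _, .inl _, F => exact F.elim
    | .inr _, .inr _, F => exact Category.id_comp F
  comp_id {x y} F := by
    match x, y, F with
    | .inl _, .inl _, F => exact Category.comp_id F
    | .inl _, .inr _, F =>
        induction F using Quot.ind with
        | _ w => dsimp; rw [Category.comp_id]
    | .inr _, .inl _, F => exact F.elim
    | .inr _, .inr _, F => exact Category.comp_id F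
  assoc {x y z w} F G H := by
    match x, y, z, w, F, G, H with
    | .inl _, .inl _, .inl _, .inl _, F, G, H => exact Category.assoc F G H
    | .inl _, .inl _, .inl _, .inr _, F, G, H =>
        induction H using Quot.ind with
        | _ w => dsimp; erw [Category.assoc]
    | .inl _, .inl _, .inr _, .inr _, F, G, H =>
        induction G using Quot.ind with
        | _ w => dsimp
    | .inl _, .inr _, .inr _, .inr _, F, G, H =>
        induction F using Quot.ind with
        | _ w => dsimp; erw [Category.assoc]
    | .inr _, .inr _, .inr _, .inr _, F, G, H => exact Category.assoc F G H
    | .inr _, .inl _, _, _, F, _, _ => exact F.elim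
    | .inl _, .inr _, .inl _, _, _, G, _ => exact G.elim
    | .inr _, .inr _, .inl _, _, _, G, _ => exact G.elim
    | _, .inl _, .inr _, .inl _, _, _, H => exact H.elim
    | _, .inr _, .inr _, .inl _, _, _, H => exact H.elim

/-- The inclusion of `B` into the cocomma category. -/
def Cocomma.inlF : B ⥤ Cocomma s t where
  obj b := Sum.inl b
  map φ := φ
  map_id _ := rfl
  map_comp _ _ := rfl

/-- The inclusion of `C` into the cocomma category. -/
def Cocomma.inrF : C ⥤ Cocomma s t where
  obj c := Sum.inr c
  map φ := φ
  map_id _ := rfl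
  map_comp _ _ := rfl

/-- The canonical natural transformation of the cocomma (lax) square. -/
def Cocomma.natTrans : s ⋙ Cocomma.inlF s t ⟶ t ⋙ Cocomma.inrF s t where
  app a := Quot.mk _ ⟨a, 𝟙 _, 𝟙 _⟩
  naturality a a' θ := by
    dsimp [Cocomma.inlF, Cocomma.inrF]
    show Quot.mk _ _ = Quot.mk _ _
    have := Quot.sound (CocommaRel.mk (s := s) (t := t) θ (𝟙 (s.obj a)) (𝟙 (t.obj a')))
    simpa using this.symm

section General
variable {A B C D : Type u} [SmallCategory A] [SmallCategory B] [SmallCategory C] [SmallCategory D]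

/-- The comparison functor from `StructuredArrow b s` to `StructuredArrow (f.obj b) g`. -/
@[simps]
def sqFunctor (s : A ⥤ B) (t : A ⥤ C) (f : B ⥤ D) (g : C ⥤ D) (α : s ⋙ f ⟶ t ⋙ g) (b : B) :
    StructuredArrow b s ⥤ StructuredArrow (f.obj b) g where
  obj j := StructuredArrow.mk (f.map j.hom ≫ α.app j.right)
  map {j j'} θ := StructuredArrow.homMk (t.map θ.right) (by
    have h1 := α.naturality θ.right
    have h2 := StructuredArrow.w θ
    dsimp at h1 ⊢
    rw [Category.assoc, ← h1, ← Functor.map_comp_assoc, h2])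
  map_id j := by ext; simp
  map_comp θ θ' := by ext; simp

theorem coBaseChange_app_app (s : A ⥤ B) (t : A ⥤ C) (f : B ⥤ D) (g : C ⥤ D)
    (α : s ⋙ f ⟶ t ⋙ g) (V : Type v) [Category.{w} V] [HasLimitsOfSize.{u,u} V]
    (H : C ⥤ V) (b : B) (j : StructuredArrow b s) :
    (((coBaseChange V s t f g α).app H).app b ≫ (s.ranObjObjIsoLimit (t ⋙ H) b).hom) ≫
        limit.π (StructuredArrow.proj b s ⋙ (t ⋙ H)) j =
      ((g.ranObjObjIsoLimit H (f.obj b)).hom ≫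
          limit.pre (StructuredArrow.proj (f.obj b) g ⋙ H) (sqFunctor s t f g α b)) ≫
        limit.π _ j := by
  rw [Category.assoc, Category.assoc, limit.pre_π, Functor.ranObjObjIsoLimit_hom_π,
    Functor.ranObjObjIsoLimit_hom_π]
  simp only [coBaseChange, restrictionSquare, NatTrans.comp_app, Functor.whiskerLeft_app,
    Functor.whiskerRight_app, Functor.comp_obj, Functor.whiskeringLeft_obj_obj, Functor.ranAdjunction_counit]
  have e1 : (((Functor.whiskeringLeft A C V).obj t ⋙ s.ran).map (g.ranCounit.app H)).app b
      = (s.ran.map (Functor.whiskerLeft t (g.ranCounit.app H))).app b := rfl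
  rw [e1, ← NatTrans.comp_app, ← Functor.map_comp, ← NatTrans.comp_app]
  set γ : s ⋙ (f ⋙ g.ran.obj H) ⟶ t ⋙ H :=
    Functor.whiskerRight α (g.ran.obj H) ≫ Functor.whiskerLeft t (g.ranCounit.app H) with hγ
  set ν : (f ⋙ g.ran.obj H) ⟶ s.ran.obj (t ⋙ H) :=
    (s.ranAdjunction V).unit.app (f ⋙ g.ran.obj H) ≫ s.ran.map γ with hν
  have n1 : ν.app b ≫ (s.ran.obj (t ⋙ H)).map j.hom
      = (f ⋙ g.ran.obj H).map j.hom ≫ ν.app (s.obj j.right) := (ν.naturality j.hom).symm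
  erw [reassoc_of% n1]
  have n2 := congr_app (s.ranCounit.naturality γ) j.right
  simp only [Functor.comp_map, Functor.whiskeringLeft_obj_map, NatTrans.comp_app, Functor.whiskerLeft_app,
    Functor.id_map] at n2
  erw [hν, NatTrans.comp_app, Category.assoc, n2,
    Functor.ranCounit_app_app_ranAdjunction_unit_app_app_assoc]
  simp [hγ]
  exact (Functor.map_comp_assoc (g.ran.obj H) (f.map j.hom) (α.app j.right) _).symm

theorem coBaseChange_isIso_of_initial (s : A ⥤ B) (t : A ⥤ C) (f : B ⥤ D) (g : C ⥤ D)
    (α : s ⋙ f ⟶ t ⋙ g) (V : Type v) [Category.{w} V] [HasLimitsOfSize.{u,u} V]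
    [∀ b : B, (sqFunctor s t f g α b).Initial] :
    IsIso (coBaseChange V s t f g α) := by
  have h : ∀ (H : C ⥤ V) (b : B), IsIso (((coBaseChange V s t f g α).app H).app b) := by
    intro H b
    have key : ((coBaseChange V s t f g α).app H).app b ≫ (s.ranObjObjIsoLimit (t ⋙ H) b).hom
        = (g.ranObjObjIsoLimit H (f.obj b)).hom ≫
            limit.pre (StructuredArrow.proj (f.obj b) g ⋙ H) (sqFunctor s t f g α b) :=
      limit.hom_ext fun j => by
        exact coBaseChange_app_app s t f g α V H b j
    have : IsIso (((coBaseChange V s t f g α).app H).app b ≫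
        (s.ranObjObjIsoLimit (t ⋙ H) b).hom) := by
      rw [key]
      have := Functor.Initial.limit_pre_isIso (sqFunctor s t f g α b)
        (G := StructuredArrow.proj (f.obj b) g ⋙ H)
      exact IsIso.comp_isIso' inferInstance this
    exact IsIso.of_isIso_comp_right _ (s.ranObjObjIsoLimit (t ⋙ H) b).hom
  have h2 : ∀ (H : C ⥤ V), IsIso ((coBaseChange V s t f g α).app H) := fun H => by
    haveI := h H
    exact NatIso.isIso_of_isIso_app _
  exact NatIso.isIso_of_isIso_app _

section Connect
variable {A B C : Type u} [SmallCategory A] [SmallCategory B] [SmallCategory C]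
variable (s : A ⥤ B) (t : A ⥤ C)
variable (b : B) (d : StructuredArrow ((Cocomma.inlF s t).obj b) (Cocomma.inrF s t))

def Cocomma.toObj (w : CocommaWord s t b d.right)
    (hw : (Quot.mk _ w : (Cocomma.inlF s t).obj b ⟶ (Cocomma.inrF s t).obj d.right) = d.hom) :
    CostructuredArrow
      (sqFunctor s t (Cocomma.inlF s t) (Cocomma.inrF s t) (Cocomma.natTrans s t) b) d :=
  CostructuredArrow.mk (Y := StructuredArrow.mk (Y := w.pt) w.l)
    (StructuredArrow.homMk w.r (by
      dsimp [sqFunctor, Cocomma.natTrans]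
      rw [← hw]
      show Quot.mk _ (CocommaWord.mk w.pt (w.l ≫ 𝟙 _) (𝟙 _ ≫ w.r)) = Quot.mk _ w
      rw [Category.comp_id, Category.id_comp]))

lemma cocomma_exists_rep
    (X : CostructuredArrow
      (sqFunctor s t (Cocomma.inlF s t) (Cocomma.inrF s t) (Cocomma.natTrans s t) b) d) :
    ∃ (w : CocommaWord s t b d.right)
      (hw : (Quot.mk _ w : (Cocomma.inlF s t).obj b ⟶ (Cocomma.inrF s t).obj d.right) = d.hom),
      X = Cocomma.toObj s t b d w hw := by
  obtain ⟨⟨⟨⟨⟩⟩, a, φ⟩, ⟨⟨⟩⟩, h⟩ := X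
  obtain ⟨⟨⟨⟨⟩⟩⟩, r, hr⟩ := h
  refine ⟨⟨a, φ, r⟩, ?_, ?_⟩
  · dsimp [sqFunctor, Cocomma.natTrans] at hr
    rw [Category.id_comp] at hr
    refine Eq.trans ?_ hr.symm
    show Quot.mk _ (CocommaWord.mk a φ r)
      = Quot.mk _ (CocommaWord.mk a (φ ≫ 𝟙 _) (𝟙 _ ≫ r))
    rw [Category.comp_id]
    exact congrArg (Quot.mk _) (congrArg (CocommaWord.mk a φ) (Category.id_comp r).symm)
  · rfl

lemma cocomma_zigzag {w w' : CocommaWord s t b d.right}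
    (h : Relation.EqvGen (CocommaRel s t b d.right) w w') :
    ∀ (hw : (Quot.mk _ w : (Cocomma.inlF s t).obj b ⟶ (Cocomma.inrF s t).obj d.right) = d.hom)
      (hw' : (Quot.mk _ w' : (Cocomma.inlF s t).obj b ⟶ (Cocomma.inrF s t).obj d.right) = d.hom),
      Zigzag (Cocomma.toObj s t b d w hw) (Cocomma.toObj s t b d w' hw') := by
  induction h with
  | rel x y hxy =>
    intro hw hw'
    obtain ⟨θ, φ, ψ⟩ := hxy
    refine Relation.ReflTransGen.single (Or.inl ⟨?_⟩)
    refine CostructuredArrow.homMk (StructuredArrow.homMk θ rfl) ?_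
    ext
    dsimp [Cocomma.toObj, sqFunctor]
    rfl
  | refl x => intro hw hw'; exact Relation.ReflTransGen.refl
  | symm x y h ih => intro hw hw'; exact Zigzag.symm (ih hw' hw)
  | trans x y z h1 h2 ih1 ih2 =>
    intro hw hw'
    have hy : (Quot.mk _ y : (Cocomma.inlF s t).obj b ⟶ (Cocomma.inrF s t).obj d.right)
        = d.hom := (Quot.eqvGen_sound h1).symm.trans hw
    exact (ih1 hw hy).trans (ih2 hy hw')

instance cocomma_sqFunctor_initial :
    (sqFunctor s t (Cocomma.inlF s t) (Cocomma.inrF s t) (Cocomma.natTrans s t) b).Initial := by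
  constructor
  intro d
  obtain ⟨w0, hw0⟩ := Quot.exists_rep
    (d.hom : (Cocomma.inlF s t).obj b ⟶ (Cocomma.inrF s t).obj d.right)
  haveI : Nonempty (CostructuredArrow
      (sqFunctor s t (Cocomma.inlF s t) (Cocomma.inrF s t) (Cocomma.natTrans s t) b) d) :=
    ⟨Cocomma.toObj s t b d w0 hw0⟩
  apply zigzag_isConnected
  intro X Y
  obtain ⟨wX, hwX, rfl⟩ := cocomma_exists_rep s t b d X
  obtain ⟨wY, hwY, rfl⟩ := cocomma_exists_rep s t b d Y
  exact cocomma_zigzag s t b d (Quot.eqvGen_exact (hwX.trans hwY.symm)) hwX hwY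

end Connect

/-- **Dual base change along a cocomma (flow sum) square is an isomorphism:** for the cocomma
square with inclusions `f : B ⥤ B ↑_A C` and `g : C ⥤ B ↑_A C`, the dual base change
transformation `f^* g_* ⟶ s_* t^*` is a natural isomorphism. -/
theorem coBaseChange_cocomma_isIso
    {A B C : Type u} [SmallCategory A] [SmallCategory B] [SmallCategory C]
    (s : A ⥤ B) (t : A ⥤ C)
    (V : Type v) [Category.{w} V] [HasLimitsOfSize.{u,u} V] [HasColimitsOfSize.{u,u} V] :
    IsIso (coBaseChange V s t (Cocomma.inlF s t) (Cocomma.inrF s t) (Cocomma.natTrans s t)) := by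
  exact coBaseChange_isIso_of_initial s t (Cocomma.inlF s t) (Cocomma.inrF s t)
    (Cocomma.natTrans s t) V
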